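/- Let P, Q : ℝ^{2n} → ℝ be smooth functions. Assume: (i) the differential dP(z) is nonzero at every point z of Z := P^{−1}(0) (0 is a regular value of P); (ii) {P,Q}(z) = 0 for every z ∈ Z (equivalently, the Hamiltonian vector field Ξ_Q is tangent to the hypersurface Z); (iii) P and Q admit global Hamiltonian flows φ^P and φ^Q. Then the following are equivalent: (a) for every z ∈ Z and all s, t ∈ ℝ, φ^P(s, φ^Q(t,z)) = φ^Q(t, φ^P(s,z)) (the two Hamiltonian flows commute on the boundary hypersurface); (b) there exists a smooth function F : ℝ^{2n} → ℝ such that {P,Q} = P² · F (the Poisson bracket {P,Q} vanishes to second order at Z). -/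

import Mathlib

open Real

noncomputable section

/-- The Poisson bracket `{P,Q}(x,p) = Σᵢ (∂P/∂pᵢ ∂Q/∂xᵢ − ∂P/∂xᵢ ∂Q/∂pᵢ)` on
`ℝ^{2n} = ℝ^n × ℝ^n`. -/
def poissonBracket (n : ℕ) (P Q : (Fin n → ℝ) × (Fin n → ℝ) → ℝ)
    (z : (Fin n → ℝ) × (Fin n → ℝ)) : ℝ :=
  ∑ i : Fin n,
    (fderiv ℝ P z (0, Pi.single i 1) * fderiv ℝ Q z (Pi.single i 1, 0) -
      fderiv ℝ P z (Pi.single i 1, 0) * fderiv ℝ Q z (0, Pi.single i 1))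

/-- The Hamiltonian vector field `Ξ_P(x,p) = (∂P/∂p, −∂P/∂x)`. -/
def hamVectorField (n : ℕ) (P : (Fin n → ℝ) × (Fin n → ℝ) → ℝ)
    (z : (Fin n → ℝ) × (Fin n → ℝ)) : (Fin n → ℝ) × (Fin n → ℝ) :=
  (fun i => fderiv ℝ P z (0, Pi.single i 1), fun i => -fderiv ℝ P z (Pi.single i 1, 0))

/-- `φ` is a global Hamiltonian flow for `P`: a smooth map `ℝ × ℝ^{2n} → ℝ^{2n}`
with `φ(0,z) = z` and `∂ₜφ(t,z) = Ξ_P(φ(t,z))`. -/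
def IsHamFlow (n : ℕ) (P : (Fin n → ℝ) × (Fin n → ℝ) → ℝ)
    (φ : ℝ → (Fin n → ℝ) × (Fin n → ℝ) → (Fin n → ℝ) × (Fin n → ℝ)) : Prop :=
  ContDiff ℝ (⊤ : ℕ∞) (fun q : ℝ × ((Fin n → ℝ) × (Fin n → ℝ)) => φ q.1 q.2) ∧
  (∀ z, φ 0 z = z) ∧
  ∀ t z, HasDerivAt (fun t' => φ t' z) (hamVectorField n P (φ t z)) t

open Filter Metric Set MeasureTheory intervalIntegral Topology
open scoped ContDiff

set_option synthInstance.maxHeartbeats 1000000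
set_option maxHeartbeats 1000000

namespace S11

theorem cast_le_infty (m : ℕ) : (m : WithTop ℕ∞) ≤ ∞ := by exact_mod_cast le_top
theorem one_le_infty : (1 : WithTop ℕ∞) ≤ ∞ := by exact_mod_cast le_top
theorem infty_add_one : ∞ + 1 ≤ (∞ : WithTop ℕ∞) := by norm_num
theorem cast_ne_infty (m : ℕ) : (m : WithTop ℕ∞) ≠ ∞ := by
  exact_mod_cast (by simp : (m : ℕ∞) ≠ ⊤)

variable {E : Type*} [NormedAddCommGroup E] [NormedSpace ℝ E]

/-- If `‖f'‖ ≤ K ‖f‖` on compacts and `f 0 = 0` then `f ≡ 0`. -/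
theorem eq_zero_of_lin_bound (f f' : ℝ → E) (hd : ∀ t, HasDerivAt f (f' t) t)
    (h0 : f 0 = 0)
    (hb : ∀ T : ℝ, 0 < T → ∃ K : ℝ, ∀ t : ℝ, |t| ≤ T → ‖f' t‖ ≤ K * ‖f t‖) :
    ∀ t, f t = 0 := by
  have fwd : ∀ (g g' : ℝ → E), (∀ t, HasDerivAt g (g' t) t) → g 0 = 0 →
      (∀ T : ℝ, 0 < T → ∃ K : ℝ, ∀ t : ℝ, |t| ≤ T → ‖g' t‖ ≤ K * ‖g t‖) →
      ∀ t, 0 ≤ t → g t = 0 := by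
    intro g g' hg hg0 hgb t ht
    rcases hgb (t + 1) (by linarith) with ⟨K, hK⟩
    have H := norm_le_gronwallBound_of_norm_deriv_right_le (f := g) (f' := g')
      (δ := 0) (K := K) (ε := 0) (a := 0) (b := t)
      (fun s _ => (hg s).continuousAt.continuousWithinAt)
      (fun s _ => (hg s).hasDerivWithinAt.mono (fun y hy => trivial))
      (by simp [hg0])
      (fun s hs => by
        have hs' : |s| ≤ t + 1 := by
          rw [abs_of_nonneg hs.1]; linarith [hs.2]
        simpa using hK s hs')
    have h2 := H t ⟨ht, le_refl t⟩
    rw [gronwallBound_ε0] at h2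
    simpa using h2
  intro t
  rcases le_or_gt 0 t with ht | ht
  · exact fwd f f' hd h0 hb t ht
  · have hg : ∀ u : ℝ, HasDerivAt (fun u => f (-u)) ((-1 : ℝ) • f' (-u)) u := by
      intro u
      exact (hd (-u)).scomp u (by simpa using hasDerivAt_neg u)
    have := fwd (fun u => f (-u)) (fun u => (-1 : ℝ) • f' (-u)) hg (by simpa using h0)
      (fun T hT => by
        rcases hb T hT with ⟨K, hK⟩
        exact ⟨K, fun u hu => by simpa using hK (-u) (by simpa using hu)⟩)
      (-t) (by linarith)
    simpa using this

variable {H : Type} [NormedAddCommGroup H] [NormedSpace ℝ H] [FiniteDimensional ℝ H]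

/-- Smoothness of parametric interval integrals of globally `C^m` integrands. -/
theorem contDiff_parametric (m : ℕ) {F : Type} [iF1 : NormedAddCommGroup F]
    [iF2 : NormedSpace ℝ F] [iF3 : CompleteSpace F] (K₀ : H × ℝ → F) (hK₀ : ContDiff ℝ m K₀) :
    ContDiff ℝ m fun z => ∫ t in (0:ℝ)..1, K₀ (z, t) := by
  induction m generalizing F with
  | zero =>
    simp only [Nat.cast_zero] at hK₀ ⊢
    rw [contDiff_zero] at hK₀ ⊢
    exact continuous_parametric_intervalIntegral_of_continuous'
      (by exact hK₀.comp (continuous_fst.prodMk continuous_snd)) 0 1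
  | succ m ih =>
    have hint : ∀ z, Continuous fun t => K₀ (z, t) :=
      fun z => hK₀.continuous.comp (continuous_const.prodMk continuous_id)
    have hder : Continuous (fderiv ℝ K₀) := hK₀.continuous_fderiv (by simp)
    have hdiff : Differentiable ℝ K₀ := hK₀.differentiable (by simp)
    have key : ∀ z₀ : H, HasFDerivAt (fun z => ∫ t in (0:ℝ)..1, K₀ (z, t))
        (∫ t in (0:ℝ)..1, (fderiv ℝ K₀ (z₀, t)).comp (ContinuousLinearMap.inl ℝ H ℝ)) z₀ := by
      intro z₀
      obtain ⟨C, hC⟩ := ((isCompact_closedBall z₀ 1).prod (isCompact_Icc (a := (0:ℝ)) (b := 1))).exists_bound_of_continuousOn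
        (f := fun q : H × ℝ => (fderiv ℝ K₀ q).comp (ContinuousLinearMap.inl ℝ H ℝ))
        (Continuous.continuousOn (by
          exact ((ContinuousLinearMap.compL ℝ H (H × ℝ) F).flip
            (ContinuousLinearMap.inl ℝ H ℝ)).continuous.comp hder))
      apply intervalIntegral.hasFDerivAt_integral_of_dominated_of_fderiv_le
        (F := fun z t => K₀ (z, t))
        (F' := fun z t => (fderiv ℝ K₀ (z, t)).comp (ContinuousLinearMap.inl ℝ H ℝ))
        (bound := fun _ => C) (s := ball z₀ 1) (ball_mem_nhds z₀ one_pos)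
      · exact Eventually.of_forall fun z => (hint z).aestronglyMeasurable
      · exact (hint z₀).intervalIntegrable 0 1
      · exact Continuous.aestronglyMeasurable (by
          exact ((ContinuousLinearMap.compL ℝ H (H × ℝ) F).flip
            (ContinuousLinearMap.inl ℝ H ℝ)).continuous.comp
            (hder.comp (continuous_const.prodMk continuous_id)))
      · refine Eventually.of_forall fun t ht x hx => hC (x, t) ⟨ball_subset_closedBall hx, ?_⟩
        have ht' : t ∈ Set.Ioc (0:ℝ) 1 := by
          rwa [Set.uIoc_of_le (by norm_num : (0:ℝ) ≤ 1)] at ht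
        exact Ioc_subset_Icc_self ht'
      · exact intervalIntegrable_const
      · refine Eventually.of_forall fun t _ x _ => ?_
        have h1 : HasFDerivAt (fun z : H => (z, t)) (ContinuousLinearMap.inl ℝ H ℝ) x := by
          exact hasFDerivAt_prodMk_left x t
        exact (hdiff (x, t)).hasFDerivAt.comp x h1
    rw [show ((m + 1 : ℕ) : WithTop ℕ∞) = (m : WithTop ℕ∞) + 1 by push_cast; ring,
      contDiff_succ_iff_fderiv]
    refine ⟨fun z => (key z).differentiableAt, by simp, ?_⟩
    have hfd : (fderiv ℝ fun z => ∫ t in (0:ℝ)..1, K₀ (z, t))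
        = fun z₀ => ∫ t in (0:ℝ)..1, (fderiv ℝ K₀ (z₀, t)).comp (ContinuousLinearMap.inl ℝ H ℝ) :=
      funext fun z₀ => (key z₀).fderiv
    rw [hfd]
    have h1 : ContDiff ℝ m (fderiv ℝ K₀) :=
      hK₀.fderiv_right (by rw [show ((m + 1 : ℕ) : WithTop ℕ∞) = (m : WithTop ℕ∞) + 1 by push_cast; ring])
    exact ih (fun q => (fderiv ℝ K₀ q).comp (ContinuousLinearMap.inl ℝ H ℝ))
      (((ContinuousLinearMap.compL ℝ H (H × ℝ) F).flip
        (ContinuousLinearMap.inl ℝ H ℝ)).contDiff.comp h1)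

abbrev EE (n : ℕ) : Type := (Fin n → ℝ) × (Fin n → ℝ)

variable {n : ℕ}

/-- basis vectors -/
def ex (n : ℕ) (i : Fin n) : EE n := (Pi.single i 1, 0)
def ep (n : ℕ) (i : Fin n) : EE n := (0, Pi.single i 1)

theorem basis_apply {F : Type*} [NormedAddCommGroup F] [NormedSpace ℝ F]
    (L : EE n →L[ℝ] F) (w : EE n) :
    L w = (∑ i, w.1 i • L (ex n i)) + ∑ i, w.2 i • L (ep n i) := by
  have h1 : ∀ u : Fin n → ℝ, ∑ i, u i • Pi.single (M := fun _ => ℝ) i (1:ℝ) = u := by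
    intro u; ext j
    rw [Finset.sum_apply]
    simp [Pi.single_apply, mul_ite]
  have hw : w = (∑ i, w.1 i • ex n i) + ∑ i, w.2 i • ep n i := by
    apply Prod.ext
    · simp only [Prod.fst_add, Prod.fst_sum, ex, ep, Prod.smul_fst, smul_zero,
        Finset.sum_const_zero, add_zero]
      exact (h1 w.1).symm
    · simp only [Prod.snd_add, Prod.snd_sum, ex, ep, Prod.smul_snd, smul_zero,
        Finset.sum_const_zero, zero_add]
      exact (h1 w.2).symm
  conv_lhs => rw [hw]
  simp [map_add, map_sum, _root_.map_smul]

section FderivApply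

variable {X F : Type*} [NormedAddCommGroup X] [NormedSpace ℝ X]
  [NormedAddCommGroup F] [NormedSpace ℝ F]

theorem contDiff_fderiv_apply {f : X → F} (hf : ContDiff ℝ (⊤:ℕ∞) f) (a : X) :
    ContDiff ℝ (⊤:ℕ∞) fun z => fderiv ℝ f z a :=
  (ContinuousLinearMap.apply ℝ F a).contDiff.comp (hf.fderiv_right infty_add_one)

theorem hasFDerivAt_fderiv_apply' {f : X → F} {z : X}
    (hd : DifferentiableAt ℝ (fderiv ℝ f) z) (a : X) :
    HasFDerivAt (fun w => fderiv ℝ f w a) ((fderiv ℝ (fderiv ℝ f) z).flip a) z := by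
  have h1 : HasFDerivAt (fderiv ℝ f) (fderiv ℝ (fderiv ℝ f) z) z := hd.hasFDerivAt
  have h2 := (ContinuousLinearMap.apply ℝ F a).hasFDerivAt.comp z h1
  convert h2 using 1
  · ext x; rfl
  · ext x; rfl

theorem diff_fderiv {f : X → F} (hf : ContDiff ℝ (⊤:ℕ∞) f) :
    Differentiable ℝ (fderiv ℝ f) :=
  (hf.fderiv_right infty_add_one).differentiable (by simp)

theorem hasFDerivAt_fderiv_apply {f : X → F} (hf : ContDiff ℝ (⊤:ℕ∞) f) (z a : X) :
    HasFDerivAt (fun w => fderiv ℝ f w a) ((fderiv ℝ (fderiv ℝ f) z).flip a) z :=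
  hasFDerivAt_fderiv_apply' (diff_fderiv hf z) a

theorem second_sym {f : X → F} (hf : ContDiff ℝ (⊤:ℕ∞) f) (z : X) (u v : X) :
    fderiv ℝ (fderiv ℝ f) z u v = fderiv ℝ (fderiv ℝ f) z v u :=
  second_derivative_symmetric (fun y => ((hf.differentiable (by simp)) y).hasFDerivAt)
    ((diff_fderiv hf z).hasFDerivAt) u v

end FderivApply

variable {P Q : EE n → ℝ}

theorem pb_eq (hP : ContDiff ℝ (⊤:ℕ∞) P) (hQ : ContDiff ℝ (⊤:ℕ∞) Q) (z : EE n) :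
    poissonBracket n P Q z = fderiv ℝ Q z (hamVectorField n P z) := by
  rw [basis_apply (fderiv ℝ Q z) (hamVectorField n P z)]
  unfold poissonBracket hamVectorField
  simp only [ex, ep, smul_eq_mul, neg_mul]
  rw [← Finset.sum_add_distrib]
  exact Finset.sum_congr rfl fun i _ => by ring

theorem dP_XiP (hP : ContDiff ℝ (⊤:ℕ∞) P) (z : EE n) :
    fderiv ℝ P z (hamVectorField n P z) = 0 := by
  rw [basis_apply (fderiv ℝ P z) (hamVectorField n P z)]
  unfold hamVectorField
  simp only [ex, ep, smul_eq_mul, neg_mul]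
  rw [← Finset.sum_add_distrib]
  exact Finset.sum_eq_zero fun i _ => by ring

theorem dP_XiQ (hP : ContDiff ℝ (⊤:ℕ∞) P) (hQ : ContDiff ℝ (⊤:ℕ∞) Q) (z : EE n) :
    fderiv ℝ P z (hamVectorField n Q z) = -poissonBracket n P Q z := by
  rw [basis_apply (fderiv ℝ P z) (hamVectorField n Q z)]
  unfold hamVectorField poissonBracket
  simp only [ex, ep, smul_eq_mul, neg_mul]
  rw [← Finset.sum_add_distrib, ← Finset.sum_neg_distrib]
  exact Finset.sum_congr rfl fun i _ => by ring

theorem contDiff_pb (hP : ContDiff ℝ (⊤:ℕ∞) P) (hQ : ContDiff ℝ (⊤:ℕ∞) Q) :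
    ContDiff ℝ (⊤:ℕ∞) (poissonBracket n P Q) := by
  unfold poissonBracket
  apply ContDiff.sum
  intro i _
  exact ((contDiff_fderiv_apply hP _).mul (contDiff_fderiv_apply hQ _)).sub
    ((contDiff_fderiv_apply hP _).mul (contDiff_fderiv_apply hQ _))

theorem contDiff_ham (hP : ContDiff ℝ (⊤:ℕ∞) P) :
    ContDiff ℝ (⊤:ℕ∞) (hamVectorField n P) :=
  (contDiff_pi.2 fun _ => contDiff_fderiv_apply hP _ : ContDiff ℝ (⊤:ℕ∞) _).prodMk
    (contDiff_pi.2 fun _ => (contDiff_fderiv_apply hP _).neg)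

/-- The derivative of the Hamiltonian vector field, as a CLM. -/
def hamD (P : EE n → ℝ) (z : EE n) : EE n →L[ℝ] EE n :=
  (ContinuousLinearMap.pi fun i => (fderiv ℝ (fderiv ℝ P) z).flip (ep n i)).prod
    (ContinuousLinearMap.pi fun i => -((fderiv ℝ (fderiv ℝ P) z).flip (ex n i)))

theorem hamD_apply (P : EE n → ℝ) (z w : EE n) :
    hamD P z w = (fun i => fderiv ℝ (fderiv ℝ P) z w (ep n i),
      fun i => -(fderiv ℝ (fderiv ℝ P) z w (ex n i))) := rfl

theorem hasFDerivAt_ham (hP : ContDiff ℝ (⊤:ℕ∞) P) (z : EE n) :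
    HasFDerivAt (hamVectorField n P) (hamD P z) z := by
  apply HasFDerivAt.prodMk
  · exact hasFDerivAt_pi.2 fun i => hasFDerivAt_fderiv_apply hP z (ep n i)
  · exact hasFDerivAt_pi.2 fun i => (hasFDerivAt_fderiv_apply hP z (ex n i)).neg

/-- Key identity: the differential of the Poisson bracket. -/
theorem fderiv_pb (hP : ContDiff ℝ (⊤:ℕ∞) P) (hQ : ContDiff ℝ (⊤:ℕ∞) Q) (z a : EE n) :
    fderiv ℝ (poissonBracket n P Q) z a =
      fderiv ℝ (fderiv ℝ Q) z (hamVectorField n P z) a -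
        fderiv ℝ (fderiv ℝ P) z (hamVectorField n Q z) a := by
  have hB : HasFDerivAt (poissonBracket n P Q)
      (∑ i : Fin n,
        ((fderiv ℝ P z (ep n i) • ((fderiv ℝ (fderiv ℝ Q) z).flip (ex n i)) +
            fderiv ℝ Q z (ex n i) • ((fderiv ℝ (fderiv ℝ P) z).flip (ep n i))) -
          (fderiv ℝ P z (ex n i) • ((fderiv ℝ (fderiv ℝ Q) z).flip (ep n i)) +
            fderiv ℝ Q z (ep n i) • ((fderiv ℝ (fderiv ℝ P) z).flip (ex n i))))) z := by
    unfold poissonBracket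
    apply HasFDerivAt.fun_sum
    intro i _
    exact ((hasFDerivAt_fderiv_apply hP z (ep n i)).mul
        (hasFDerivAt_fderiv_apply hQ z (ex n i))).sub
      ((hasFDerivAt_fderiv_apply hP z (ex n i)).mul
        (hasFDerivAt_fderiv_apply hQ z (ep n i)))
  have hL : fderiv ℝ (poissonBracket n P Q) z a = ∑ i : Fin n,
      (fderiv ℝ P z (ep n i) * fderiv ℝ (fderiv ℝ Q) z a (ex n i) +
        fderiv ℝ Q z (ex n i) * fderiv ℝ (fderiv ℝ P) z a (ep n i) -
        (fderiv ℝ P z (ex n i) * fderiv ℝ (fderiv ℝ Q) z a (ep n i) +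
          fderiv ℝ Q z (ep n i) * fderiv ℝ (fderiv ℝ P) z a (ex n i))) := by
    rw [hB.fderiv]
    simp [ContinuousLinearMap.sum_apply, ContinuousLinearMap.smul_apply,
      ContinuousLinearMap.sub_apply, ContinuousLinearMap.add_apply,
      ContinuousLinearMap.flip_apply, smul_eq_mul]
  have hRQ : fderiv ℝ (fderiv ℝ Q) z (hamVectorField n P z) a =
      ∑ i : Fin n, (fderiv ℝ P z (ep n i) * fderiv ℝ (fderiv ℝ Q) z a (ex n i) -
        fderiv ℝ P z (ex n i) * fderiv ℝ (fderiv ℝ Q) z a (ep n i)) := by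
    have := basis_apply ((fderiv ℝ (fderiv ℝ Q) z).flip a) (hamVectorField n P z)
    simp only [ContinuousLinearMap.flip_apply] at this
    rw [this]
    unfold hamVectorField
    dsimp only
    simp only [smul_eq_mul]
    rw [← Finset.sum_add_distrib]
    refine Finset.sum_congr rfl fun i _ => ?_
    rw [second_sym hQ z (ex n i) a, second_sym hQ z (ep n i) a]
    show fderiv ℝ P z (0, Pi.single i 1) * _ + -fderiv ℝ P z (Pi.single i 1, 0) * _ = _
    unfold ex ep
    ring
  have hRP : fderiv ℝ (fderiv ℝ P) z (hamVectorField n Q z) a =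
      ∑ i : Fin n, (fderiv ℝ Q z (ep n i) * fderiv ℝ (fderiv ℝ P) z a (ex n i) -
        fderiv ℝ Q z (ex n i) * fderiv ℝ (fderiv ℝ P) z a (ep n i)) := by
    have := basis_apply ((fderiv ℝ (fderiv ℝ P) z).flip a) (hamVectorField n Q z)
    simp only [ContinuousLinearMap.flip_apply] at this
    rw [this]
    unfold hamVectorField
    dsimp only
    simp only [smul_eq_mul]
    rw [← Finset.sum_add_distrib]
    refine Finset.sum_congr rfl fun i _ => ?_
    rw [second_sym hP z (ex n i) a, second_sym hP z (ep n i) a]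
    show fderiv ℝ Q z (0, Pi.single i 1) * _ + -fderiv ℝ Q z (Pi.single i 1, 0) * _ = _
    unfold ex ep
    ring
  rw [hL, hRQ, hRP, ← Finset.sum_sub_distrib]
  exact Finset.sum_congr rfl fun i _ => by ring

/-- If `d{P,Q}` vanishes at `y` then the linearized fields commute there. -/
theorem hamD_comm (hP : ContDiff ℝ (⊤:ℕ∞) P) (hQ : ContDiff ℝ (⊤:ℕ∞) Q) (y : EE n)
    (hdB : fderiv ℝ (poissonBracket n P Q) y = 0) :
    hamD Q y (hamVectorField n P y) = hamD P y (hamVectorField n Q y) := by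
  have key : ∀ a : EE n, fderiv ℝ (fderiv ℝ Q) y (hamVectorField n P y) a =
      fderiv ℝ (fderiv ℝ P) y (hamVectorField n Q y) a := by
    intro a
    have := fderiv_pb hP hQ y a
    rw [hdB] at this
    simp only [ContinuousLinearMap.zero_apply] at this
    linarith [this]
  rw [hamD_apply, hamD_apply]
  refine Prod.ext (funext fun i => ?_) (funext fun i => ?_) <;> dsimp only
  · exact key (ep n i)
  · rw [key (ex n i)]

section Flow

variable {R : EE n → ℝ} {φ : ℝ → EE n → EE n}

/-- The joint flow map. -/
def fM (φ : ℝ → EE n → EE n) : ℝ × EE n → EE n := fun q => φ q.1 q.2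

theorem fM_smooth (hφ : IsHamFlow n R φ) : ContDiff ℝ (⊤:ℕ∞) (fM φ) := hφ.1

theorem flow_cont (hφ : IsHamFlow n R φ) (z : EE n) : Continuous fun t => φ t z :=
  (fM_smooth hφ).continuous.comp (continuous_id.prodMk continuous_const)

theorem flow_fderiv_partial (hφ : IsHamFlow n R φ) (s : ℝ) (w : EE n) :
    HasFDerivAt (fun z => φ s z)
      ((fderiv ℝ (fM φ) (s, w)).comp (ContinuousLinearMap.inr ℝ ℝ (EE n))) w := by
  have h1 : HasFDerivAt (fun z : EE n => ((s : ℝ), z)) (ContinuousLinearMap.inr ℝ ℝ (EE n)) w := by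
    exact hasFDerivAt_prodMk_right s w
  exact (((fM_smooth hφ).differentiable (by simp)) (s, w)).hasFDerivAt.comp w h1

theorem flow_zero_fderiv (hφ : IsHamFlow n R φ) (w v : EE n) :
    fderiv ℝ (fM φ) (0, w) (0, v) = v := by
  have h1 := flow_fderiv_partial hφ 0 w
  have h2 : (fun z : EE n => φ 0 z) = id := funext hφ.2.1
  rw [h2] at h1
  have := h1.unique (hasFDerivAt_id w)
  calc fderiv ℝ (fM φ) (0, w) (0, v)
      = ((fderiv ℝ (fM φ) (0, w)).comp (ContinuousLinearMap.inr ℝ ℝ (EE n))) v := rfl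
    _ = v := by rw [this]; rfl

theorem fderiv_flow_dir1 (hφ : IsHamFlow n R φ) (s : ℝ) (z : EE n) :
    fderiv ℝ (fM φ) (s, z) (1, 0) = hamVectorField n R (φ s z) := by
  have h1 : HasDerivAt (fun t => φ t z) (fderiv ℝ (fM φ) (s, z) (1, 0)) s := by
    have hq : HasDerivAt (fun t : ℝ => ((t : ℝ), z)) ((1 : ℝ), (0 : EE n)) s :=
      (hasDerivAt_id s).prodMk (hasDerivAt_const s z)
    exact (((fM_smooth hφ).differentiable (by simp)) (s, z)).hasFDerivAt.comp_hasDerivAt s hq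
  exact h1.unique (hφ.2.2 s z)

/-- The variational equation along the flow. -/
theorem variational (hφ : IsHamFlow n R φ) (hR : ContDiff ℝ (⊤:ℕ∞) R) (w v : EE n) (s : ℝ) :
    HasDerivAt (fun s' => fderiv ℝ (fM φ) (s', w) (0, v))
      (hamD R (φ s w) (fderiv ℝ (fM φ) (s, w) (0, v))) s := by
  have hΦ : ContDiff ℝ (⊤:ℕ∞) (fM φ) := fM_smooth hφ
  have hdiffd : Differentiable ℝ (fderiv ℝ (fM φ)) := diff_fderiv hΦ
  have h1 : HasDerivAt (fun s' => fderiv ℝ (fM φ) (s', w))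
      (fderiv ℝ (fderiv ℝ (fM φ)) (s, w) (1, 0)) s := by
    have hq : HasDerivAt (fun s' : ℝ => ((s' : ℝ), w)) ((1 : ℝ), (0 : EE n)) s :=
      (hasDerivAt_id s).prodMk (hasDerivAt_const s w)
    exact (hdiffd (s, w)).hasFDerivAt.comp_hasDerivAt s hq
  have h2 : HasDerivAt (fun s' => fderiv ℝ (fM φ) (s', w) (0, v))
      (fderiv ℝ (fderiv ℝ (fM φ)) (s, w) (1, 0) (0, v)) s := by
    have := h1.clm_apply (hasDerivAt_const s (((0:ℝ), v) : ℝ × EE n))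
    simpa using this
  have hsym : fderiv ℝ (fderiv ℝ (fM φ)) (s, w) (1, 0) (0, v)
      = fderiv ℝ (fderiv ℝ (fM φ)) (s, w) (0, v) (1, 0) := second_sym hΦ (s, w) _ _
  have h3 : HasFDerivAt (fun q : ℝ × EE n => fderiv ℝ (fM φ) q (1, 0))
      ((fderiv ℝ (fderiv ℝ (fM φ)) (s, w)).flip (1, 0)) (s, w) :=
    hasFDerivAt_fderiv_apply hΦ (s, w) (1, 0)
  have hfun : (fun q : ℝ × EE n => fderiv ℝ (fM φ) q (1, 0))
      = fun q => hamVectorField n R (fM φ q) := funext fun q => fderiv_flow_dir1 hφ q.1 q.2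
  have h4 : HasFDerivAt (fun q : ℝ × EE n => hamVectorField n R (fM φ q))
      ((hamD R (φ s w)).comp (fderiv ℝ (fM φ) (s, w))) (s, w) :=
    by have h := (hasFDerivAt_ham hR (φ s w)).comp (s, w) ((hΦ.differentiable (by simp)) (s, w)).hasFDerivAt; exact h
  rw [hfun] at h3
  have h5 := h3.unique h4
  have h6 : fderiv ℝ (fderiv ℝ (fM φ)) (s, w) (1, 0) (0, v)
      = hamD R (φ s w) (fderiv ℝ (fM φ) (s, w) (0, v)) := by
    rw [hsym]
    exact congrArg (fun L : (ℝ × EE n) →L[ℝ] EE n => L (0, v)) h5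
  rwa [h6] at h2

/-- `P` is constant along its own flow. -/
theorem flow_self_preserves (hφ : IsHamFlow n R φ) (hR : ContDiff ℝ (⊤:ℕ∞) R) (s : ℝ)
    (z : EE n) : R (φ s z) = R z := by
  have hd : ∀ t : ℝ, HasDerivAt (fun t => R (φ t z) - R z) ((0:ℝ)) t := by
    intro t
    have h1 : HasDerivAt (fun t => R (φ t z))
        (fderiv ℝ R (φ t z) (hamVectorField n R (φ t z))) t :=
      ((hR.differentiable (by simp)) (φ t z)).hasFDerivAt.comp_hasDerivAt t (hφ.2.2 t z)
    rw [dP_XiP hR] at h1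
    simpa using h1.sub_const (R z)
  have h2 := eq_zero_of_lin_bound _ _ hd (by simp [hφ.2.1 z])
    (fun T _ => ⟨0, fun t _ => by simp⟩) s
  simpa [sub_eq_zero] using h2

variable {P Q : EE n → ℝ}

/-- If `{P,Q} = P² F`, the flow of `Q` preserves `Z = {P = 0}`. -/
theorem flowQ_preserves_Z (hφQ : IsHamFlow n Q φ) (hP : ContDiff ℝ (⊤:ℕ∞) P)
    (hQ : ContDiff ℝ (⊤:ℕ∞) Q) {F : EE n → ℝ} (hF : Continuous F)
    (hBF : ∀ w, poissonBracket n P Q w = P w ^ 2 * F w)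
    {z : EE n} (hz : P z = 0) (t : ℝ) : P (φ t z) = 0 := by
  have hd : ∀ t : ℝ, HasDerivAt (fun t => P (φ t z))
      (-(P (φ t z) * F (φ t z)) * P (φ t z)) t := by
    intro t
    have h1 : HasDerivAt (fun t => P (φ t z))
        (fderiv ℝ P (φ t z) (hamVectorField n Q (φ t z))) t :=
      ((hP.differentiable (by simp)) (φ t z)).hasFDerivAt.comp_hasDerivAt t (hφQ.2.2 t z)
    rw [dP_XiQ hP hQ, hBF] at h1
    convert h1 using 1
    ring
  have hb : ∀ T : ℝ, 0 < T → ∃ K : ℝ, ∀ u : ℝ, |u| ≤ T →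
      ‖-(P (φ u z) * F (φ u z)) * P (φ u z)‖ ≤ K * ‖P (φ u z)‖ := by
    intro T hT
    have hc : Continuous fun u => P (φ u z) * F (φ u z) :=
      (hP.continuous.comp (flow_cont hφQ z)).mul (hF.comp (flow_cont hφQ z))
    obtain ⟨K, hK⟩ := (isCompact_Icc (a := -T) (b := T)).exists_bound_of_continuousOn
      hc.continuousOn
    refine ⟨K, fun u hu => ?_⟩
    rw [norm_mul, norm_neg]
    exact mul_le_mul_of_nonneg_right
      (hK _ (Set.mem_Icc.2 ⟨by linarith [(abs_le.1 hu).1], (abs_le.1 hu).2⟩))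
      (norm_nonneg _)
  have := eq_zero_of_lin_bound (fun t => P (φ t z))
    (fun t => -(P (φ t z) * F (φ t z)) * P (φ t z)) hd (by simpa [hφQ.2.1 z] using hz) hb t
  exact this

/-- Pushforward of `Ξ_Q` by the flow of `P` along `Z`. -/
theorem pushforward_XiQ {φP : ℝ → EE n → EE n} (hφP : IsHamFlow n P φP)
    (hP : ContDiff ℝ (⊤:ℕ∞) P) (hQ : ContDiff ℝ (⊤:ℕ∞) Q)
    (hdB : ∀ y, P y = 0 → fderiv ℝ (poissonBracket n P Q) y = 0)
    {z : EE n} (hz : P z = 0) (s : ℝ) :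
    fderiv ℝ (fM φP) (s, z) (0, hamVectorField n Q z) = hamVectorField n Q (φP s z) := by
  set v := hamVectorField n Q z with hv
  set V := fun s => fderiv ℝ (fM φP) (s, z) (0, v) - hamVectorField n Q (φP s z) with hV
  have hy : ∀ s, P (φP s z) = 0 := fun s => (flow_self_preserves hφP hP s z).trans hz
  have hV' : ∀ s, HasDerivAt V (hamD P (φP s z) (V s)) s := by
    intro s
    have h1 := variational hφP hP z v s
    have h2 : HasDerivAt (fun s => hamVectorField n Q (φP s z))
        (hamD Q (φP s z) (hamVectorField n P (φP s z))) s :=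
      by have h := (hasFDerivAt_ham hQ (φP s z)).comp_hasDerivAt s (hφP.2.2 s z); exact h
    have h3 := h1.sub h2
    have h4 : hamD Q (φP s z) (hamVectorField n P (φP s z))
        = hamD P (φP s z) (hamVectorField n Q (φP s z)) :=
      hamD_comm hP hQ _ (hdB _ (hy s))
    rw [h4] at h3
    have h5 : hamD P (φP s z) (fderiv ℝ (fM φP) (s, z) (0, v)) -
        hamD P (φP s z) (hamVectorField n Q (φP s z)) = hamD P (φP s z) (V s) := by
      rw [← map_sub]
    rwa [h5] at h3
  have hV0 : V 0 = 0 := by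
    simp only [hV, flow_zero_fderiv hφP z v, hφP.2.1 z, hv, sub_self]
    rw [flow_zero_fderiv hφP z, sub_self]
  have hb : ∀ T : ℝ, 0 < T → ∃ K : ℝ, ∀ t : ℝ, |t| ≤ T →
      ‖hamD P (φP t z) (V t)‖ ≤ K * ‖V t‖ := by
    intro T hT
    have hcont : Continuous fun t => hamD P (φP t z) := by
      have heq : (fun t => hamD P (φP t z)) = fun t => fderiv ℝ (hamVectorField n P) (φP t z) :=
        funext fun t => ((hasFDerivAt_ham hP (φP t z)).fderiv).symm
      rw [heq]
      exact ((contDiff_ham hP).continuous_fderiv (by simp)).comp (flow_cont hφP z)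
    obtain ⟨K, hK⟩ := (isCompact_Icc (a := -T) (b := T)).exists_bound_of_continuousOn
      hcont.continuousOn
    refine ⟨K, fun t ht => ?_⟩
    calc ‖hamD P (φP t z) (V t)‖ ≤ ‖hamD P (φP t z)‖ * ‖V t‖ :=
          (hamD P (φP t z)).le_opNorm (V t)
      _ ≤ K * ‖V t‖ := mul_le_mul_of_nonneg_right
          (hK _ (Set.mem_Icc.2 ⟨by linarith [(abs_le.1 ht).1], (abs_le.1 ht).2⟩))
          (norm_nonneg _)
  have := eq_zero_of_lin_bound V (fun s => hamD P (φP s z) (V s)) hV' hV0 hb s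
  have h6 : V s = 0 := this
  rw [hV] at h6
  have := sub_eq_zero.1 h6
  exact this

/-- Uniqueness for the `Ξ_Q`-ODE. -/
theorem flow_unique (hQ : ContDiff ℝ (⊤:ℕ∞) Q) {α β : ℝ → EE n}
    (hα : ∀ t, HasDerivAt α (hamVectorField n Q (α t)) t)
    (hβ : ∀ t, HasDerivAt β (hamVectorField n Q (β t)) t)
    (h0 : α 0 = β 0) : ∀ t, α t = β t := by
  have hαc : Continuous α := by
    rw [continuous_iff_continuousAt]; exact fun t => (hα t).continuousAt
  have hβc : Continuous β := by
    rw [continuous_iff_continuousAt]; exact fun t => (hβ t).continuousAt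
  set S := {t : ℝ | α t = β t} with hS
  have hclosed : IsClosed S := isClosed_eq hαc hβc
  have hopen : IsOpen S := by
    rw [isOpen_iff_mem_nhds]
    intro t₀ ht₀
    obtain ⟨K, sset, hsset, hlip⟩ :=
      ((contDiff_ham hQ).of_le one_le_infty).contDiffAt.exists_lipschitzOnWith (x := α t₀)
    have hev := ODE_solution_unique_of_eventually (v := fun _ => hamVectorField n Q)
      (s := fun _ => sset) (Eventually.of_forall fun _ => hlip)
      (f := α) (g := β) (t₀ := t₀) ?_ ?_ ht₀
    · exact hev
    · filter_upwards [hαc.continuousAt.preimage_mem_nhds hsset] with t ht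
      exact ⟨hα t, ht⟩
    · have he : α t₀ = β t₀ := ht₀
      filter_upwards [hβc.continuousAt.preimage_mem_nhds (he ▸ hsset)] with t ht
      exact ⟨hβ t, ht⟩
  have : S = Set.univ := IsClopen.eq_univ ⟨hclosed, hopen⟩ ⟨0, h0⟩
  intro t
  have ht : t ∈ S := this ▸ Set.mem_univ t
  exact ht

/-- Direction (b) ⇒ (a). -/
theorem dir_b_to_a {φP φQ : ℝ → EE n → EE n} (hφP : IsHamFlow n P φP) (hφQ : IsHamFlow n Q φQ)
    (hP : ContDiff ℝ (⊤:ℕ∞) P) (hQ : ContDiff ℝ (⊤:ℕ∞) Q)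
    {F : EE n → ℝ} (hFc : ContDiff ℝ (⊤:ℕ∞) F)
    (hBF : ∀ w, poissonBracket n P Q w = P w ^ 2 * F w)
    {z : EE n} (hz : P z = 0) (s t : ℝ) : φP s (φQ t z) = φQ t (φP s z) := by
  have hdB : ∀ y, P y = 0 → fderiv ℝ (poissonBracket n P Q) y = 0 := by
    intro y hy
    have hBeq : poissonBracket n P Q = fun w => P w * (P w * F w) :=
      funext fun w => by rw [hBF w]; ring
    have hPd : HasFDerivAt P (fderiv ℝ P y) y := ((hP.differentiable (by simp)) y).hasFDerivAt
    have hFd : HasFDerivAt F (fderiv ℝ F y) y := ((hFc.differentiable (by simp)) y).hasFDerivAt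
    have hMd := hPd.mul hFd
    have hc := hPd.mul hMd
    have hres := hc.fderiv
    have hPPF : (P * (P * F)) = fun w => P w * (P w * F w) := rfl
    rw [hPPF, ← hBeq] at hres
    rw [hres, hy]
    simp [hy]
  have hZt : ∀ t, P (φQ t z) = 0 := fun t =>
    flowQ_preserves_Z hφQ hP hQ hFc.continuous hBF hz t
  have hα : ∀ t, HasDerivAt (fun t' => φP s (φQ t' z))
      (hamVectorField n Q (φP s (φQ t z))) t := by
    intro t
    have h2 := (flow_fderiv_partial hφP s (φQ t z)).comp_hasDerivAt t (hφQ.2.2 t z)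
    have h3 : ((fderiv ℝ (fM φP) (s, φQ t z)).comp (ContinuousLinearMap.inr ℝ ℝ (EE n)))
        (hamVectorField n Q (φQ t z)) = hamVectorField n Q (φP s (φQ t z)) :=
      pushforward_XiQ hφP hP hQ hdB (hZt t) s
    rwa [h3] at h2
  have hβ : ∀ t, HasDerivAt (fun t' => φQ t' (φP s z))
      (hamVectorField n Q (φQ t (φP s z))) t := fun t => hφQ.2.2 t (φP s z)
  have h0 : φP s (φQ 0 z) = φQ 0 (φP s z) := by rw [hφQ.2.1, hφQ.2.1]
  exact flow_unique hQ hα hβ h0 t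

/-- Direction (a) ⇒ vanishing of `d{P,Q}` on `Z`. -/
theorem dir_a_to_dB {φP φQ : ℝ → EE n → EE n} (hφP : IsHamFlow n P φP) (hφQ : IsHamFlow n Q φQ)
    (hP : ContDiff ℝ (⊤:ℕ∞) P) (hQ : ContDiff ℝ (⊤:ℕ∞) Q)
    (hcomm : ∀ z, P z = 0 → ∀ s t : ℝ, φP s (φQ t z) = φQ t (φP s z))
    {z : EE n} (hz : P z = 0) : fderiv ℝ (poissonBracket n P Q) z = 0 := by
  have key1 : ∀ t, hamVectorField n P (φQ t z)
      = fderiv ℝ (fM φQ) (t, z) (0, hamVectorField n P z) := by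
    intro t
    have hfunc : (fun s => φP s (φQ t z)) = fun s => φQ t (φP s z) :=
      funext fun s => hcomm z hz s t
    have hL : HasDerivAt (fun s => φP s (φQ t z)) (hamVectorField n P (φQ t z)) 0 := by
      have := hφP.2.2 0 (φQ t z)
      rwa [hφP.2.1 (φQ t z)] at this
    have hR : HasDerivAt (fun s => φQ t (φP s z))
        (((fderiv ℝ (fM φQ) (t, z)).comp (ContinuousLinearMap.inr ℝ ℝ (EE n)))
          (hamVectorField n P z)) 0 := by
      have h2 := (flow_fderiv_partial hφQ t (φP 0 z)).comp_hasDerivAt 0 (hφP.2.2 0 z)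
      rw [hφP.2.1 z] at h2
      exact h2
    rw [hfunc] at hL
    exact hL.unique hR
  have hLd : HasDerivAt (fun t => hamVectorField n P (φQ t z))
      (hamD P (φQ 0 z) (hamVectorField n Q (φQ 0 z))) 0 :=
    by have h := (hasFDerivAt_ham hP (φQ 0 z)).comp_hasDerivAt 0 (hφQ.2.2 0 z); exact h
  have hRd := variational hφQ hQ z (hamVectorField n P z) 0
  rw [funext key1] at hLd
  have huniq := hLd.unique hRd
  rw [hφQ.2.1 z, flow_zero_fderiv hφQ z _] at huniq
  have h1 : ∀ i, fderiv ℝ (fderiv ℝ Q) z (hamVectorField n P z) (ep n i)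
      = fderiv ℝ (fderiv ℝ P) z (hamVectorField n Q z) (ep n i) :=
    fun i => (congrFun (congrArg Prod.fst huniq) i).symm
  have h2 : ∀ i, fderiv ℝ (fderiv ℝ Q) z (hamVectorField n P z) (ex n i)
      = fderiv ℝ (fderiv ℝ P) z (hamVectorField n Q z) (ex n i) := by
    intro i
    have h2' : (-(fderiv ℝ (fderiv ℝ P) z (hamVectorField n Q z) (ex n i)) : ℝ)
        = -(fderiv ℝ (fderiv ℝ Q) z (hamVectorField n P z) (ex n i)) :=
      congrFun (congrArg Prod.snd huniq) i
    have := neg_inj.1 h2'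
    exact this.symm
  have hN : fderiv ℝ (fderiv ℝ Q) z (hamVectorField n P z)
      = fderiv ℝ (fderiv ℝ P) z (hamVectorField n Q z) := by
    apply ContinuousLinearMap.ext
    intro b
    rw [basis_apply (fderiv ℝ (fderiv ℝ Q) z (hamVectorField n P z)) b,
      basis_apply (fderiv ℝ (fderiv ℝ P) z (hamVectorField n Q z)) b]
    congr 1
    · exact Finset.sum_congr rfl fun i _ => by rw [h2 i]
    · exact Finset.sum_congr rfl fun i _ => by rw [h1 i]
  apply ContinuousLinearMap.ext
  intro a
  rw [ContinuousLinearMap.zero_apply, fderiv_pb hP hQ z a, hN, sub_self]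

end Flow

section Hadamard

variable {P : EE n → ℝ}

theorem nebot_ne (hreg : ∀ z, P z = 0 → fderiv ℝ P z ≠ 0) {z : EE n} (hz : P z = 0) :
    (𝓝[{w : EE n | P w ≠ 0}] z).NeBot := by
  rw [← mem_closure_iff_nhdsWithin_neBot]
  by_contra h
  have hev : ∀ᶠ w in 𝓝 z, P w = 0 := by
    rw [mem_closure_iff_nhds] at h
    push_neg at h
    obtain ⟨U, hU, hUe⟩ := h
    filter_upwards [hU] with w hw
    by_contra hPw
    exact absurd hUe (Set.nonempty_iff_ne_empty.1 ⟨w, hw, hPw⟩)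
  have h0 : fderiv ℝ P z = 0 := by
    have : P =ᶠ[𝓝 z] fun _ => (0:ℝ) := hev
    rw [this.fderiv_eq]
    exact fderiv_const_apply 0
  exact hreg z hz h0

/-- Local second-order division: near a regular zero of `P`, a function vanishing to
second order on `{P = 0}` is `P²` times a `C^m` function. -/
theorem local_factor (hP : ContDiff ℝ (⊤:ℕ∞) P) {B : EE n → ℝ} (hB : ContDiff ℝ (⊤:ℕ∞) B)
    (h0 : ∀ w, P w = 0 → B w = 0) (h1 : ∀ w, P w = 0 → fderiv ℝ B w = 0)
    {z₀ : EE n} (hz₀ : P z₀ = 0) (hℓ0 : fderiv ℝ P z₀ ≠ 0) (m : ℕ) :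
    ∃ (G : EE n → ℝ) (U : Set (EE n)), IsOpen U ∧ z₀ ∈ U ∧ ContDiff ℝ m G ∧
      (∀ z ∈ U, B z = P z ^ 2 * G z) := by
  classical
  set ℓ := fderiv ℝ P z₀ with hℓdef
  obtain ⟨a, ha⟩ : ∃ a, ℓ a ≠ 0 := by
    by_contra h
    push_neg at h
    exact hℓ0 (ContinuousLinearMap.ext fun w => by simpa using h w)
  set v : EE n := (ℓ a)⁻¹ • a with hvdef
  have hv : ℓ v = 1 := by
    rw [hvdef, _root_.map_smul, smul_eq_mul, inv_mul_cancel₀ ha]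
  set Θ : EE n → EE n := fun z => z + (P z - ℓ z) • v with hΘdef
  have hΘP : ∀ z, ℓ (Θ z) = P z := by
    intro z
    simp only [hΘdef, map_add, _root_.map_smul, smul_eq_mul, hv]
    ring
  have hΘsmooth : ContDiff ℝ (⊤:ℕ∞) Θ :=
    contDiff_id.add ((hP.sub ℓ.contDiff).smul contDiff_const)
  set M : ℕ := m + 2 with hMdef
  have hn1 : 1 ≤ (M : WithTop ℕ∞) := by
    exact_mod_cast Nat.one_le_iff_ne_zero.2 (by omega)
  have hn1' : (M : WithTop ℕ∞) ≠ 0 := ne_of_gt (lt_of_lt_of_le zero_lt_one hn1)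
  have hMat : ContDiffAt ℝ (M : ℕ) Θ z₀ := (hΘsmooth.of_le (cast_le_infty M)).contDiffAt
  have hΘderiv : HasFDerivAt Θ
      ((ContinuousLinearEquiv.refl ℝ (EE n) : EE n ≃L[ℝ] EE n) : EE n →L[ℝ] EE n) z₀ := by
    have hsub : HasFDerivAt (fun z => P z - ℓ z) (0 : EE n →L[ℝ] ℝ) z₀ := by
      have := ((hP.differentiable (by simp)) z₀).hasFDerivAt.sub ℓ.hasFDerivAt
      exact this.congr_fderiv (by rw [hℓdef, sub_self])
    have hsm := hsub.smul (hasFDerivAt_const v z₀)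
    have h1' := (hasFDerivAt_id z₀).add hsm
    refine h1'.congr_fderiv ?_
    apply ContinuousLinearMap.ext
    intro w
    simp
  have hstrict := hMat.hasStrictFDerivAt' hΘderiv hn1'
  set y₀ := Θ z₀ with hy₀def
  set ψ : EE n → EE n := hstrict.localInverse Θ _ z₀ with hψdef
  have hψat : ContDiffAt ℝ (M : ℕ) ψ y₀ := hMat.to_localInverse hΘderiv hn1'
  obtain ⟨u, hu_mem, hu⟩ := hψat.contDiffOn le_rfl (fun h => absurd h (cast_ne_infty M))
  have hright : ∀ᶠ y in 𝓝 y₀, Θ (ψ y) = y := hstrict.eventually_right_inverse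
  have hleft : ∀ᶠ z in 𝓝 z₀, ψ (Θ z) = z := hstrict.eventually_left_inverse
  obtain ⟨r₂, hr₂pos, hball⟩ : ∃ r₂ > 0,
      closedBall y₀ r₂ ⊆ interior u ∩ {y | Θ (ψ y) = y} := by
    have hmem : interior u ∩ {y | Θ (ψ y) = y} ∈ 𝓝 y₀ :=
      inter_mem (interior_mem_nhds.2 hu_mem) hright
    exact (nhds_basis_closedBall.mem_iff.1 hmem)
  set χ : ContDiffBump y₀ := ⟨r₂/2, r₂, by positivity, by linarith⟩ with hχdef
  set G1 : EE n → ℝ := fun y => χ y * B (ψ y) with hG1def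
  have hG1 : ContDiff ℝ (M : ℕ) G1 := by
    rw [contDiff_iff_contDiffAt]
    intro y
    by_cases hy : y ∈ interior u
    · have hψy : ContDiffAt ℝ (M : ℕ) ψ y :=
        (hu.mono interior_subset).contDiffAt (IsOpen.mem_nhds isOpen_interior hy)
      exact ((χ.contDiff.of_le (cast_le_infty M)).contDiffAt).mul
        (((hB.of_le (cast_le_infty M)).contDiffAt).comp y hψy)
    · have hy' : y ∉ tsupport (χ : EE n → ℝ) := by
        rw [χ.tsupport_eq]
        intro hc
        exact hy (hball hc).1
      have hev : G1 =ᶠ[𝓝 y] fun _ => 0 := by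
        filter_upwards [(isClosed_tsupport _).isOpen_compl.mem_nhds hy'] with w hw
        simp [hG1def, image_eq_zero_of_notMem_tsupport hw]
      exact (contDiffAt_const (c := 0)).congr_of_eventuallyEq hev
  -- vanishing of G1 to second order on {ℓ = 0} near y₀
  have hsmall : ball y₀ (r₂/2) ⊆ interior u ∩ {y | Θ (ψ y) = y} := fun y hy =>
    hball (closedBall_subset_closedBall (by linarith) (ball_subset_closedBall hy))
  have hPψ : ∀ y ∈ ball y₀ (r₂/2), P (ψ y) = ℓ y := by
    intro y hy
    rw [← (hsmall hy).2, hΘP, (hsmall hy).2]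
  have hG1zero : ∀ y ∈ ball y₀ (r₂/2), ℓ y = 0 → G1 y = 0 := by
    intro y hy hℓy
    simp [hG1def, h0 (ψ y) ((hPψ y hy).trans hℓy)]
  have hG1fder : ∀ y ∈ ball y₀ (r₂/2), ℓ y = 0 → fderiv ℝ G1 y = 0 := by
    intro y hy hℓy
    have hψy_diff : DifferentiableAt ℝ ψ y :=
      ((hu.mono interior_subset).contDiffAt
        (isOpen_interior.mem_nhds (hsmall hy).1)).differentiableAt hn1'
    have hev : G1 =ᶠ[𝓝 y] fun w => B (ψ w) := by
      filter_upwards [isOpen_ball.mem_nhds hy] with w hw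
      have hw1 : χ w = 1 := χ.one_of_mem_closedBall (ball_subset_closedBall hw)
      simp [hG1def, hw1]
    rw [hev.fderiv_eq]
    have hcomp : fderiv ℝ (fun w => B (ψ w)) y = (fderiv ℝ B (ψ y)).comp (fderiv ℝ ψ y) :=
      fderiv_comp y ((hB.differentiable (by simp)) (ψ y)) hψy_diff
    rw [hcomp, h1 (ψ y) ((hPψ y hy).trans hℓy)]
    exact ContinuousLinearMap.zero_comp _
  obtain ⟨δ, hδpos, hδ⟩ : ∃ δ > 0, ∀ z ∈ ball z₀ δ,
      ψ (Θ z) = z ∧ ‖Θ z - y₀‖ + ‖P z‖ * ‖v‖ < r₂/2 := by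
    have hc : ContinuousAt (fun z => ‖Θ z - y₀‖ + ‖P z‖ * ‖v‖) z₀ :=
      (((hΘsmooth.continuous.sub continuous_const).norm).add
        ((hP.continuous.norm).mul continuous_const)).continuousAt
    have hval : ‖Θ z₀ - y₀‖ + ‖P z₀‖ * ‖v‖ < r₂/2 := by
      rw [← hy₀def]
      simp [hz₀]
      positivity
    have hev2 : ∀ᶠ z in 𝓝 z₀, ‖Θ z - y₀‖ + ‖P z‖ * ‖v‖ < r₂/2 := by
      filter_upwards [hc.preimage_mem_nhds (Iio_mem_nhds hval)] with w hw
      exact hw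
    exact Metric.eventually_nhds_iff_ball.1 (hleft.and hev2)
  have hc1 : ((m : WithTop ℕ∞) + 1) + 1 ≤ (M : WithTop ℕ∞) := by
    rw [hMdef]; push_cast; exact le_of_eq (by ring)
  have hd1 : ContDiff ℝ ((m : WithTop ℕ∞) + 1) (fderiv ℝ G1) := hG1.fderiv_right hc1
  have hdd : ContDiff ℝ (m : ℕ) (fderiv ℝ (fderiv ℝ G1)) := hd1.fderiv_right le_rfl
  have hdG1diff : Differentiable ℝ (fderiv ℝ G1) := hd1.differentiable (by simp)
  set Kf : EE n × ℝ → ℝ := fun q =>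
    (1 - q.2) * fderiv ℝ (fderiv ℝ G1) (Θ q.1 - (1 - q.2) • (P q.1 • v)) v v with hKf
  have hKsm : ContDiff ℝ m Kf := by
    have hysm : ContDiff ℝ (m : ℕ) (fun q : EE n × ℝ => Θ q.1 - (1 - q.2) • (P q.1 • v)) := by
      apply ContDiff.sub
      · exact (hΘsmooth.of_le (cast_le_infty m)).comp contDiff_fst
      · exact (contDiff_const.sub contDiff_snd).smul
          (((hP.of_le (cast_le_infty m)).comp contDiff_fst).smul contDiff_const)
    have h2 := hdd.comp hysm
    exact (contDiff_const.sub contDiff_snd).mul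
      ((h2.clm_apply contDiff_const).clm_apply contDiff_const)
  set G : EE n → ℝ := fun z => ∫ t in (0:ℝ)..1, Kf (z, t) with hGdef
  refine ⟨G, ball z₀ δ, isOpen_ball, mem_ball_self hδpos, contDiff_parametric m Kf hKsm, ?_⟩
  intro z hz
  obtain ⟨hzleft, hzsize⟩ := hδ z hz
  set b : EE n := P z • v with hbdef
  set yz : ℝ → EE n := fun t => Θ z - b + t • b with hyzdef
  have hyz2 : ∀ t : ℝ, Θ z - (1 - t) • b = yz t := by
    intro t
    rw [hyzdef]
    dsimp only
    rw [sub_smul, one_smul]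
    abel
  have hyz_mem : ∀ t ∈ Icc (0:ℝ) 1, yz t ∈ ball y₀ (r₂/2) := by
    intro t ht
    rw [← hyz2 t, mem_ball, dist_eq_norm]
    have habs : |1 - t| ≤ 1 := by
      rw [abs_le]; constructor <;> [linarith [ht.2]; linarith [ht.1]]
    have hbnorm : ‖b‖ = ‖P z‖ * ‖v‖ := by rw [hbdef, norm_smul]
    calc ‖Θ z - (1-t) • b - y₀‖ = ‖(Θ z - y₀) - (1-t) • b‖ := by
          rw [sub_right_comm]
      _ ≤ ‖Θ z - y₀‖ + ‖(1-t) • b‖ := norm_sub_le _ _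
      _ ≤ ‖Θ z - y₀‖ + ‖b‖ := by
          rw [norm_smul]
          have : ‖(1 - t : ℝ)‖ ≤ 1 := by rwa [Real.norm_eq_abs]
          nlinarith [norm_nonneg b]
      _ < r₂/2 := by rw [hbnorm]; exact hzsize
  have hG1diff : Differentiable ℝ G1 := hG1.differentiable hn1'
  have hyzd : ∀ t : ℝ, HasDerivAt yz b t := by
    intro t
    have := ((hasDerivAt_id t).smul_const b).const_add (Θ z - b)
    rw [one_smul] at this; exact this
  have hu1 : ∀ t : ℝ, HasDerivAt (fun t => G1 (yz t)) (fderiv ℝ G1 (yz t) b) t :=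
    fun t => (hG1diff (yz t)).hasFDerivAt.comp_hasDerivAt t (hyzd t)
  have hu2 : ∀ t : ℝ, HasDerivAt (fun t => fderiv ℝ G1 (yz t) b)
      (fderiv ℝ (fderiv ℝ G1) (yz t) b b) t := by
    intro t
    have hh := hasFDerivAt_fderiv_apply' (f := G1) (hdG1diff (yz t)) b
    exact hh.comp_hasDerivAt t (hyzd t)
  set w : ℝ → ℝ := fun t => G1 (yz t) + (1 - t) * (fderiv ℝ G1 (yz t) b) with hwdef
  have hw : ∀ t ∈ Set.uIcc (0:ℝ) 1, HasDerivAt w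
      ((1 - t) * (fderiv ℝ (fderiv ℝ G1) (yz t) b b)) t := by
    intro t _
    have h := (hu1 t).add
      ((((hasDerivAt_const t (1:ℝ)).sub (hasDerivAt_id t))).mul (hu2 t))
    refine h.congr_deriv ?_
    simp only [Pi.sub_apply, id_eq]
    ring
  have hyzc : Continuous yz := continuous_const.add (continuous_id.smul continuous_const)
  have hcontD2 : Continuous fun t : ℝ => (1 - t) * fderiv ℝ (fderiv ℝ G1) (yz t) b b := by
    have hin : Continuous fun t : ℝ => fderiv ℝ (fderiv ℝ G1) (yz t) :=
      hdd.continuous.comp hyzc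
    exact (continuous_const.sub continuous_id).mul
      ((ContinuousLinearMap.apply ℝ ℝ b).continuous.comp
        ((ContinuousLinearMap.apply ℝ (EE n →L[ℝ] ℝ) b).continuous.comp hin))
  have hFTC := intervalIntegral.integral_eq_sub_of_hasDerivAt hw
    (hcontD2.intervalIntegrable 0 1)
  have hy1 : yz 1 = Θ z := by
    rw [hyzdef]; dsimp only; rw [one_smul]; abel
  have hw1 : w 1 = B z := by
    rw [hwdef]; dsimp only
    rw [hy1]
    have hmem1 : Θ z ∈ ball y₀ (r₂/2) := by
      have := hyz_mem 1 (by norm_num)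
      rwa [hy1] at this
    have hχ1 : χ (Θ z) = 1 := χ.one_of_mem_closedBall (ball_subset_closedBall hmem1)
    rw [hG1def]
    dsimp only
    rw [hχ1, hzleft]
    ring
  have hℓy0 : ℓ (yz 0) = 0 := by
    rw [hyzdef]; dsimp only
    rw [zero_smul, add_zero, map_sub, hΘP, hbdef, _root_.map_smul, smul_eq_mul, hv]
    ring
  have hy0mem : yz 0 ∈ ball y₀ (r₂/2) := hyz_mem 0 (by norm_num)
  have hw0 : w 0 = 0 := by
    rw [hwdef]; dsimp only
    rw [hG1zero _ hy0mem hℓy0, hG1fder _ hy0mem hℓy0]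
    simp
  have hbil : ∀ t : ℝ, (1 - t) * fderiv ℝ (fderiv ℝ G1) (yz t) b b = P z ^ 2 * Kf (z, t) := by
    intro t
    rw [hKf]
    dsimp only
    rw [hyz2 t, hbdef]
    have hsmul : fderiv ℝ (fderiv ℝ G1) (yz t) (P z • v) (P z • v)
        = P z * (P z * fderiv ℝ (fderiv ℝ G1) (yz t) v v) := by
      have e1 : (fderiv ℝ (fderiv ℝ G1) (yz t)) (P z • v)
          = P z • (fderiv ℝ (fderiv ℝ G1) (yz t)) v := _root_.map_smul _ _ _
      rw [e1, ContinuousLinearMap.smul_apply, _root_.map_smul, smul_eq_mul, smul_eq_mul]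
    rw [hsmul]
    ring
  have hInt : ∫ t in (0:ℝ)..1, (1 - t) * fderiv ℝ (fderiv ℝ G1) (yz t) b b
      = P z ^ 2 * ∫ t in (0:ℝ)..1, Kf (z, t) := by
    rw [← intervalIntegral.integral_const_mul]
    apply intervalIntegral.integral_congr
    intro t _
    exact hbil t
  rw [hInt, hw1, hw0, sub_zero] at hFTC
  exact hFTC.symm

/-- Global second-order Hadamard division. -/
theorem hadamard (hP : ContDiff ℝ (⊤:ℕ∞) P)
    (hreg : ∀ z, P z = 0 → fderiv ℝ P z ≠ 0)
    {B : EE n → ℝ} (hB : ContDiff ℝ (⊤:ℕ∞) B)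
    (h0 : ∀ w, P w = 0 → B w = 0) (h1 : ∀ w, P w = 0 → fderiv ℝ B w = 0) :
    ∃ F : EE n → ℝ, ContDiff ℝ (⊤:ℕ∞) F ∧ ∀ z, B z = P z ^ 2 * F z := by
  classical
  set F : EE n → ℝ := fun z =>
    if P z = 0 then limUnder (𝓝[{w : EE n | P w ≠ 0}] z) (fun w => B w / P w ^ 2)
    else B z / P z ^ 2 with hFdef
  have hFoff : ∀ z, P z ≠ 0 → F z = B z / P z ^ 2 := fun z h => if_neg h
  have hiden : ∀ z, B z = P z ^ 2 * F z := by
    intro z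
    by_cases h : P z = 0
    · rw [h, h0 z h]; ring
    · rw [hFoff z h]; field_simp
  refine ⟨F, ?_, hiden⟩
  rw [contDiff_iff_contDiffAt]
  intro z
  by_cases hz : P z = 0
  · have hAll : ∀ m : ℕ, ContDiffAt ℝ m F z := by
      intro m
      obtain ⟨G, U, hUopen, hzU, hGsm, hGid⟩ :=
        local_factor hP hB h0 h1 hz (hreg z hz) m
      have heq : ∀ w ∈ U, F w = G w := by
        intro w hw
        by_cases hPw : P w = 0
        · rw [hFdef]
          dsimp only
          rw [if_pos hPw]
          haveI hne : (𝓝[{w : EE n | P w ≠ 0}] w).NeBot := nebot_ne hreg hPw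
          have hG : Tendsto G (𝓝[{w : EE n | P w ≠ 0}] w) (𝓝 (G w)) :=
            (hGsm.continuous.continuousAt).continuousWithinAt
          have htend : Tendsto (fun w' => B w' / P w' ^ 2)
              (𝓝[{w : EE n | P w ≠ 0}] w) (𝓝 (G w)) := by
            refine Filter.Tendsto.congr' ?_ hG
            have hUn : U ∈ 𝓝[{w : EE n | P w ≠ 0}] w :=
              nhdsWithin_le_nhds (hUopen.mem_nhds hw)
            filter_upwards [hUn, self_mem_nhdsWithin] with w' hw' hPw'
            have hne' : P w' ≠ 0 := hPw'
            rw [hGid w' hw']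
            field_simp
          exact htend.limUnder_eq
        · rw [hFoff w hPw, hGid w hw]
          field_simp
      have hevq : F =ᶠ[𝓝 z] G := eventually_of_mem (hUopen.mem_nhds hzU) heq
      exact (hGsm.contDiffAt).congr_of_eventuallyEq hevq
    exact contDiffAt_infty.2 hAll
  · have hopen : IsOpen {w : EE n | P w ≠ 0} :=
      hP.continuous.isOpen_preimage _ isOpen_compl_singleton
    have hev : F =ᶠ[𝓝 z] fun w => B w / P w ^ 2 :=
      eventually_of_mem (hopen.mem_nhds hz) fun w hw => hFoff w hw
    exact ((hB.contDiffAt).div ((hP.contDiffAt).pow 2)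
      (pow_ne_zero 2 hz)).congr_of_eventuallyEq hev

end Hadamard
end S11

/-- for smooth `P, Q` with `0` a regular value of `P` and
`{P,Q} = 0` on `Z = P⁻¹(0)`, with global Hamiltonian flows `φP, φQ`, the flows
commute on `Z` if and only if `{P,Q}` vanishes to second order at `Z`, i.e.
`{P,Q} = P² F` for some smooth `F`. -/
theorem statement11 (n : ℕ) (P Q : (Fin n → ℝ) × (Fin n → ℝ) → ℝ)
    (hP : ContDiff ℝ (⊤ : ℕ∞) P) (hQ : ContDiff ℝ (⊤ : ℕ∞) Q)
    (hreg : ∀ z, P z = 0 → fderiv ℝ P z ≠ 0)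
    (htan : ∀ z, P z = 0 → poissonBracket n P Q z = 0)
    (φP φQ : ℝ → (Fin n → ℝ) × (Fin n → ℝ) → (Fin n → ℝ) × (Fin n → ℝ))
    (hφP : IsHamFlow n P φP) (hφQ : IsHamFlow n Q φQ) :
    (∀ z, P z = 0 → ∀ s t : ℝ, φP s (φQ t z) = φQ t (φP s z)) ↔
      (∃ F : (Fin n → ℝ) × (Fin n → ℝ) → ℝ, ContDiff ℝ (⊤ : ℕ∞) F ∧
        ∀ z, poissonBracket n P Q z = (P z) ^ 2 * F z) := by
  constructor
  · intro hcomm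
    have h1 : ∀ w, P w = 0 → fderiv ℝ (poissonBracket n P Q) w = 0 :=
      fun w hw => S11.dir_a_to_dB hφP hφQ hP hQ hcomm hw
    obtain ⟨F, hF, hid⟩ := S11.hadamard hP hreg (S11.contDiff_pb hP hQ) htan h1
    exact ⟨F, hF, hid⟩
  · rintro ⟨F, hF, hBF⟩ z hz s t
    exact S11.dir_b_to_a hφP hφQ hP hQ hF hBF hz s t
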